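/- Correctness of the separating automaton: with A_sep defined from A_max and A_min (satisfying ⟦A_max⟧ ≤ ⟦A_min⟧), final states F_sep = {(R, F, t) : R ∩ F ≠ ∅} with final weight ⟦A_max⟧(t), one has ⟦A_max⟧(s) ≤ ⟦A_sep⟧(s) ≤ ⟦A_min⟧(s) for all terms s (with ⟦A_sep⟧(s) = ⊥ exactly when both sides are ⊥). -/

import Mathlib

/-- A ranked alphabet: symbols with arities. -/
structure RankedAlphabet where
  symb : Type
  ar : symb → ℕ

/-- Terms (finite ranked trees) over a ranked alphabet. -/
inductive Term (A : RankedAlphabet) : Type where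
  | node (a : A.symb) (ts : Fin (A.ar a) → Term A) : Term A

/-- Height of a term: length of the longest branch. -/
def Term.height {A : RankedAlphabet} : Term A → ℕ
  | .node _ ts => Finset.univ.sup fun i => (ts i).height + 1

/-- Size of a term: number of nodes. -/
def Term.size {A : RankedAlphabet} : Term A → ℕ
  | .node _ ts => 1 + ∑ i, (ts i).size

/-- A nondeterministic tree automaton with real weights on transitions and final states. -/
structure WTA (A : RankedAlphabet) (Q : Type) where
  trans : (a : A.symb) → (Fin (A.ar a) → Q) → Q → Prop
  wt : (a : A.symb) → (Fin (A.ar a) → Q) → Q → ℝ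
  final : Q → Prop
  fwt : Q → ℝ

/-- Runs of an automaton over a term, reaching a given state at the root. -/
inductive RunOf {A : RankedAlphabet} {Q : Type} (M : WTA A Q) : Term A → Q → Type where
  | node (a : A.symb) (ts : Fin (A.ar a) → Term A) (qs : Fin (A.ar a) → Q) (q : Q)
      (hq : M.trans a qs q) (rs : ∀ i, RunOf M (ts i) (qs i)) : RunOf M (.node a ts) q

/-- The weight of a run: sum of the weights of the transitions used. -/
def RunOf.wt {A : RankedAlphabet} {Q : Type} {M : WTA A Q} :
    {t : Term A} → {q : Q} → RunOf M t q → ℝ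
  | _, _, .node a _ qs q _ rs => (∑ i, (rs i).wt) + M.wt a qs q

/-- Contexts: terms with exactly one hole. -/
inductive Ctx (A : RankedAlphabet) : Type where
  | hole : Ctx A
  | node (a : A.symb) (i : Fin (A.ar a)) (c : Ctx A) (ts : Fin (A.ar a) → Term A) : Ctx A

/-- Plugging a term into the hole of a context. -/
def Ctx.plug {A : RankedAlphabet} : Ctx A → Term A → Term A
  | .hole, t => t
  | .node a i c ts, t => .node a (Function.update ts i (c.plug t))

/-- Composition of contexts: plugging the second context into the hole of the first. -/
def Ctx.comp {A : RankedAlphabet} : Ctx A → Ctx A → Ctx A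
  | .hole, d => d
  | .node a i c ts, d => .node a i (c.comp d) ts

/-- Iterated composition of a context with itself. -/
def Ctx.pow {A : RankedAlphabet} (m : Ctx A) : ℕ → Ctx A
  | 0 => .hole
  | n + 1 => m.comp (m.pow n)

/-- Runs over a context, from a state (at the hole) to a state (at the root). -/
inductive CRun {A : RankedAlphabet} {Q : Type} (M : WTA A Q) : Ctx A → Q → Q → Type where
  | hole (p : Q) : CRun M .hole p p
  | node (a : A.symb) (i : Fin (A.ar a)) (c : Ctx A) (ts : Fin (A.ar a) → Term A)
      (qs : Fin (A.ar a) → Q) (p q : Q)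
      (hq : M.trans a qs q)
      (hc : CRun M c p (qs i))
      (rs : ∀ j, j ≠ i → RunOf M (ts j) (qs j)) : CRun M (.node a i c ts) p q

/-- The weight of a run over a context. -/
def CRun.wt {A : RankedAlphabet} {Q : Type} {M : WTA A Q} :
    {c : Ctx A} → {p q : Q} → CRun M c p q → ℝ
  | _, _, _, .hole _ => 0
  | _, _, _, .node a i _ _ qs _ q _ hc rs =>
      (∑ j : {j // j ≠ i}, (rs j.1 j.2).wt) + M.wt a qs q + hc.wt

/-- Gluing a run over a context with a run over a term yields a run over the plugged term. -/
def CRun.glue {A : RankedAlphabet} {Q : Type} {M : WTA A Q} {t : Term A} :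
    {c : Ctx A} → {p q : Q} → CRun M c p q → RunOf M t p → RunOf M (c.plug t) q
  | _, _, _, .hole _, r => r
  | _, _, _, .node a i c ts qs _ q hq hc rs, r =>
      .node a (Function.update ts i (c.plug t)) qs q hq
        (fun j =>
          if h : j = i then
            cast (by subst h; rw [Function.update_self]) (CRun.glue hc r)
          else
            cast (congrArg (fun s => RunOf M s (qs j))
              (Function.update_of_ne h (c.plug t) ts).symm) (rs j h))

/-- Gluing runs over composed contexts. -/
def CRun.cglue {A : RankedAlphabet} {Q : Type} {M : WTA A Q} {d : Ctx A} {p : Q} :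
    {c : Ctx A} → {q r : Q} → CRun M c q r → CRun M d p q → CRun M (c.comp d) p r
  | _, _, _, .hole _, rd => rd
  | _, _, _, .node a i c ts qs _ r hq hc rs, rd =>
      .node a i (c.comp d) ts qs p r hq (hc.cglue rd) rs

/-- The `n`-fold iteration of a loop run over a context. -/
def CRun.pow {A : RankedAlphabet} {Q : Type} {M : WTA A Q} {m : Ctx A} {q : Q}
    (σ : CRun M m q q) : (n : ℕ) → CRun M (m.pow n) q q
  | 0 => .hole q
  | n + 1 => σ.cglue (σ.pow n)

/-- `x` is the weight of some accepting run of `M` over `t`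
(weight of the run plus the final-state weight). -/
def AccWeight {A : RankedAlphabet} {Q : Type} (M : WTA A Q) (t : Term A) (x : ℝ) : Prop :=
  ∃ (q : Q) (r : RunOf M t q), M.final q ∧ r.wt + M.fwt q = x

/-- `M` has some accepting run over `t`. -/
def HasAcc {A : RankedAlphabet} {Q : Type} (M : WTA A Q) (t : Term A) : Prop :=
  ∃ x, AccWeight M t x

/-- `f` is the max-plus semantics of `M`: `f t = ⊥` iff there is no accepting run,
and otherwise `f t` is the maximum weight of an accepting run. -/
def ComputesMax {A : RankedAlphabet} {Q : Type} (M : WTA A Q) (f : Term A → Option ℝ) : Prop :=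
  ∀ t, (f t = none ↔ ¬ HasAcc M t) ∧
    ∀ x, f t = some x → AccWeight M t x ∧ ∀ y, AccWeight M t y → y ≤ x

/-- `f` is the min-plus semantics of `M`. -/
def ComputesMin {A : RankedAlphabet} {Q : Type} (M : WTA A Q) (f : Term A → Option ℝ) : Prop :=
  ∀ t, (f t = none ↔ ¬ HasAcc M t) ∧
    ∀ x, f t = some x → AccWeight M t x ∧ ∀ y, AccWeight M t y → x ≤ y

/-- An automaton is unambiguous if every term has at most one accepting run. -/
def Unambiguous {A : RankedAlphabet} {Q : Type} (M : WTA A Q) : Prop :=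
  ∀ (t : Term A) (q q' : Q) (r : RunOf M t q) (r' : RunOf M t q'),
    M.final q → M.final q' → q = q' ∧ HEq r r'

/-- The order on `ℝ ∪ {⊥}` in which `⊥` is comparable only with itself. -/
def OLe : Option ℝ → Option ℝ → Prop
  | none, none => True
  | some x, some y => x ≤ y
  | _, _ => False

/-- Shifting a value of `ℝ ∪ {⊥}` by a real number. -/
def oshift (u : Option ℝ) (x : ℝ) : Option ℝ := u.map (· + x)

/-- The set of states reachable at the root by some run over `t`. -/
def reachSet {A : RankedAlphabet} {Q : Type} (M : WTA A Q) (t : Term A) : Set Q :=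
  {q | Nonempty (RunOf M t q)}

/-- The set of states at the hole from which there is an accepting run over the context `c`. -/
def prodSet {A : RankedAlphabet} {Q : Type} (M : WTA A Q) (c : Ctx A) : Set Q :=
  {p | ∃ q, M.final q ∧ Nonempty (CRun M c p q)}

section Bi
variable {A : RankedAlphabet} {Q1 Q2 : Type} (M1 : WTA A Q1) (M2 : WTA A Q2)

/-- Reachable states of the disjoint union of the two automata. -/
def biReach (t : Term A) : Set (Q1 ⊕ Q2) :=
  Sum.inl '' reachSet M1 t ∪ Sum.inr '' reachSet M2 t

/-- Productive states of the disjoint union of the two automata. -/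
def biProd (c : Ctx A) : Set (Q1 ⊕ Q2) :=
  Sum.inl '' prodSet M1 c ∪ Sum.inr '' prodSet M2 c

/-- Final states of the disjoint union of the two automata. -/
def biFinal : Set (Q1 ⊕ Q2) :=
  Sum.inl '' {q | M1.final q} ∪ Sum.inr '' {q | M2.final q}

/-- Transition relation of the disjoint union of the two automata. -/
def biTrans (a : A.symb) (qs : Fin (A.ar a) → Q1 ⊕ Q2) (q : Q1 ⊕ Q2) : Prop :=
  (∃ (qs' : Fin (A.ar a) → Q1) (q' : Q1),
      qs = Sum.inl ∘ qs' ∧ q = Sum.inl q' ∧ M1.trans a qs' q') ∨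
  (∃ (qs' : Fin (A.ar a) → Q2) (q' : Q2),
      qs = Sum.inr ∘ qs' ∧ q = Sum.inr q' ∧ M2.trans a qs' q')

/-- The family `Reachable` of sets of states of the form `Reach(t)`. -/
def ReachableSets : Set (Set (Q1 ⊕ Q2)) := {S | ∃ t, biReach M1 M2 t = S}

/-- The family `Productive` of sets of states of the form `Prod(c)`. -/
def ProductiveSets : Set (Set (Q1 ⊕ Q2)) := {S | ∃ c, biProd M1 M2 c = S}

/-- `t` refines `s` for `P` with shift `x`. -/
def Refines (P : Set (Q1 ⊕ Q2)) (t s : Term A) (x : ℝ) : Prop :=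
  biReach M1 M2 s = biReach M1 M2 t ∧
  (∀ p : Q1, Sum.inl p ∈ P → ∀ ρ : RunOf M1 s p, ∃ ρ' : RunOf M1 t p, ρ.wt ≤ ρ'.wt + x) ∧
  (∀ q : Q2, Sum.inr q ∈ P → ∀ τ : RunOf M2 s q, ∃ τ' : RunOf M2 t q, τ'.wt + x ≤ τ.wt)

end Bi

/-- Transitions of the product automaton `A_pro`, relative to a transition relation `Δ`. -/
def ProTrans {A : RankedAlphabet} {Q : Type}
    (Δ : ∀ a : A.symb, (Fin (A.ar a) → Q) → Q → Prop) (a : A.symb)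
    (RPs : Fin (A.ar a) → Set Q × Set Q) (RP : Set Q × Set Q) : Prop :=
  RP.1 = {r | ∃ rs, Δ a rs r ∧ ∀ j, rs j ∈ (RPs j).1} ∧
  ∀ i, (RPs i).2 =
    {ri | ∃ rs p, Δ a rs p ∧ rs i = ri ∧ (∀ j, j ≠ i → rs j ∈ (RPs j).1) ∧ p ∈ RP.2}

section Asep
variable {A : RankedAlphabet} {Q1 Q2 : Type} (M1 : WTA A Q1) (M2 : WTA A Q2)

/-- A state `(R, P, t)` of the separating automaton is well-formed if `R ∈ Reachable`,
`P ∈ Productive`, `Reach(t) = R` and `height(t) ≤ k`. -/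
def GoodState (k : ℕ) (S : Set (Q1 ⊕ Q2) × Set (Q1 ⊕ Q2) × Term A) : Prop :=
  S.1 ∈ ReachableSets M1 M2 ∧ S.2.1 ∈ ProductiveSets M1 M2 ∧
  biReach M1 M2 S.2.2 = S.1 ∧ S.2.2.height ≤ k

/-- The map `sr` is a valid refinement map: for every productive-set `P` and every term
`s`, `sr P s = (t, x)` where `t` has height at most `k` and refines `s` for `P` with
shift `x`. -/
def GoodSr (k : ℕ) (sr : Set (Q1 ⊕ Q2) → Term A → Term A × ℝ) : Prop :=
  ∀ P ∈ ProductiveSets M1 M2, ∀ s : Term A,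
    ((sr P s).1).height ≤ k ∧ Refines M1 M2 P (sr P s).1 s (sr P s).2

/-- The separating automaton `A_sep`: states are triples `(R, P, t)`, transitions follow
the product automaton `A_pro` on the first two components and apply the refinement map
`sr_P` on the third component, with the shift as transition weight; final states are the
`(R, F, t)` with `R ∩ F ≠ ∅`, of final weight `⟦A_max⟧(t)`. -/
noncomputable def Asep (k : ℕ) (sr : Set (Q1 ⊕ Q2) → Term A → Term A × ℝ) :
    WTA A (Set (Q1 ⊕ Q2) × Set (Q1 ⊕ Q2) × Term A) where
  trans a sts out :=
    GoodState M1 M2 k out ∧ (∀ i, GoodState M1 M2 k (sts i)) ∧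
    ProTrans (biTrans M1 M2) a (fun i => ((sts i).1, (sts i).2.1)) (out.1, out.2.1) ∧
    out.2.2 = (sr out.2.1 (Term.node a fun i => (sts i).2.2)).1
  wt a sts out := (sr out.2.1 (Term.node a fun i => (sts i).2.2)).2
  final S := S.2.1 = biFinal M1 M2 ∧ (S.1 ∩ biFinal M1 M2).Nonempty
  fwt S := sSup {x | AccWeight M1 S.2.2 x}

end Asep


section Aux

variable {A : RankedAlphabet} {Q1 Q2 : Type} {M1 : WTA A Q1} {M2 : WTA A Q2}

lemma mem_biReach_inl {t : Term A} {q : Q1} :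
    Sum.inl q ∈ biReach M1 M2 t ↔ q ∈ reachSet M1 t := by
  simp [biReach]

lemma mem_biReach_inr {t : Term A} {q : Q2} :
    Sum.inr q ∈ biReach M1 M2 t ↔ q ∈ reachSet M2 t := by
  simp [biReach]

lemma mem_biProd_inl {c : Ctx A} {p : Q1} :
    Sum.inl p ∈ biProd M1 M2 c ↔ p ∈ prodSet M1 c := by
  simp [biProd]

lemma mem_biProd_inr {c : Ctx A} {p : Q2} :
    Sum.inr p ∈ biProd M1 M2 c ↔ p ∈ prodSet M2 c := by
  simp [biProd]

lemma mem_biFinal_inl {q : Q1} :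
    Sum.inl q ∈ biFinal M1 M2 ↔ M1.final q := by
  simp [biFinal]

lemma mem_biFinal_inr {q : Q2} :
    Sum.inr q ∈ biFinal M1 M2 ↔ M2.final q := by
  simp [biFinal]

lemma reach_node {Q : Type} {M : WTA A Q} {a : A.symb} {ts : Fin (A.ar a) → Term A} :
    reachSet M (.node a ts) = {q | ∃ qs, M.trans a qs q ∧ ∀ i, qs i ∈ reachSet M (ts i)} := by
  ext q
  constructor
  · rintro ⟨r⟩
    cases r with
    | node a ts qs q hq rs => exact ⟨qs, hq, fun i => ⟨rs i⟩⟩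
  · rintro ⟨qs, hq, hr⟩
    have : ∀ i, Nonempty (RunOf M (ts i) (qs i)) := hr
    exact ⟨.node a ts qs q hq fun i => (this i).some⟩

lemma biReach_node {a : A.symb} {ts : Fin (A.ar a) → Term A} :
    biReach M1 M2 (.node a ts)
      = {q | ∃ qs, biTrans M1 M2 a qs q ∧ ∀ i, qs i ∈ biReach M1 M2 (ts i)} := by
  ext q
  cases q with
  | inl q =>
    rw [mem_biReach_inl, reach_node]
    constructor
    · rintro ⟨qs, hq, hr⟩
      exact ⟨Sum.inl ∘ qs, Or.inl ⟨qs, q, rfl, rfl, hq⟩,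
        fun i => mem_biReach_inl.2 (hr i)⟩
    · rintro ⟨qs, hq | hq, hr⟩
      · obtain ⟨qs', q', hqs, hq', ht⟩ := hq
        cases Sum.inl.injEq q q' ▸ hq' with
        | _ => 
          refine ⟨qs', by rwa [Sum.inl.inj hq'] , fun i => ?_⟩
          have := hr i
          rw [hqs] at this
          exact mem_biReach_inl.1 this
      · obtain ⟨qs', q', hqs, hq', ht⟩ := hq
        exact absurd hq' (by simp)
  | inr q =>
    rw [mem_biReach_inr, reach_node]
    constructor
    · rintro ⟨qs, hq, hr⟩
      exact ⟨Sum.inr ∘ qs, Or.inr ⟨qs, q, rfl, rfl, hq⟩,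
        fun i => mem_biReach_inr.2 (hr i)⟩
    · rintro ⟨qs, hq | hq, hr⟩
      · obtain ⟨qs', q', hqs, hq', ht⟩ := hq
        exact absurd hq' (by simp)
      · obtain ⟨qs', q', hqs, hq', ht⟩ := hq
        refine ⟨qs', by rwa [Sum.inr.inj hq'], fun i => ?_⟩
        have := hr i
        rw [hqs] at this
        exact mem_biReach_inr.1 this


lemma crun_hole {Q : Type} {M : WTA A Q} {p q : Q} (r : CRun M .hole p q) : p = q := by
  cases r; rfl

lemma prodSet_hole {Q : Type} {M : WTA A Q} : prodSet M .hole = {p | M.final p} := by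
  ext p
  constructor
  · rintro ⟨q, hq, ⟨r⟩⟩
    rwa [crun_hole r]
  · intro hp
    exact ⟨p, hp, ⟨.hole p⟩⟩

lemma biProd_hole : biProd M1 M2 .hole = biFinal M1 M2 := by
  simp [biProd, biFinal, prodSet_hole]

lemma crun_comp_iff {Q : Type} {M : WTA A Q} {c d : Ctx A} {p r : Q} :
    Nonempty (CRun M (c.comp d) p r) ↔
      ∃ q, Nonempty (CRun M d p q) ∧ Nonempty (CRun M c q r) := by
  constructor
  · intro hne
    induction c generalizing r with
    | hole => exact ⟨r, hne, ⟨.hole r⟩⟩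
    | node a i c ts ih =>
      obtain ⟨ρ⟩ := hne
      cases ρ with
      | node _ _ _ _ qs _ _ hq hc rs =>
        obtain ⟨q', h1, ⟨h2⟩⟩ := ih ⟨hc⟩
        exact ⟨q', h1, ⟨.node a i c ts qs q' r hq h2 rs⟩⟩
  · rintro ⟨q, ⟨r1⟩, ⟨r2⟩⟩
    exact ⟨r2.cglue r1⟩

lemma prodSet_comp {Q : Type} {M : WTA A Q} {c d : Ctx A} :
    prodSet M (c.comp d) = {p | ∃ q, Nonempty (CRun M d p q) ∧ q ∈ prodSet M c} := by
  ext p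
  constructor
  · rintro ⟨q, hq, hr⟩
    obtain ⟨q', h1, h2⟩ := crun_comp_iff.1 hr
    exact ⟨q', h1, q, hq, h2⟩
  · rintro ⟨q, h1, q', hq', h2⟩
    exact ⟨q', hq', crun_comp_iff.2 ⟨q, h1, h2⟩⟩

lemma crun_nodehole_iff {Q : Type} {M : WTA A Q} {a : A.symb} {i : Fin (A.ar a)}
    {ts : Fin (A.ar a) → Term A} {p q : Q} :
    Nonempty (CRun M (Ctx.node a i Ctx.hole ts) p q) ↔
      ∃ qs, M.trans a qs q ∧ qs i = p ∧ ∀ j, j ≠ i → qs j ∈ reachSet M (ts j) := by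
  constructor
  · rintro ⟨ρ⟩
    cases ρ with
    | node a i _ ts qs p q hq hc rs =>
      exact ⟨qs, hq, (crun_hole hc).symm, fun j hj => ⟨rs j hj⟩⟩
  · rintro ⟨qs, hq, hi, hr⟩
    have hruns : ∀ j, j ≠ i → Nonempty (RunOf M (ts j) (qs j)) := hr
    subst hi
    exact ⟨.node a i .hole ts qs (qs i) q hq (.hole (qs i)) fun j hj => (hruns j hj).some⟩

lemma prodSet_comp_nodehole {Q : Type} {M : WTA A Q} {c : Ctx A} {a : A.symb}
    {i : Fin (A.ar a)} {ts : Fin (A.ar a) → Term A} :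
    prodSet M (c.comp (Ctx.node a i Ctx.hole ts)) =
      {ri | ∃ qs p, M.trans a qs p ∧ qs i = ri ∧
        (∀ j, j ≠ i → qs j ∈ reachSet M (ts j)) ∧ p ∈ prodSet M c} := by
  rw [prodSet_comp]
  ext x
  simp only [Set.mem_setOf_eq, crun_nodehole_iff]
  constructor
  · rintro ⟨q, ⟨qs, hq, hi, hr⟩, hqc⟩
    exact ⟨qs, q, hq, hi, hr, hqc⟩
  · rintro ⟨qs, p, hq, hi, hr, hpc⟩
    exact ⟨p, ⟨qs, hq, hi, hr⟩, hpc⟩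

lemma biProd_comp_nodehole {c : Ctx A} {a : A.symb} {i : Fin (A.ar a)}
    {ts : Fin (A.ar a) → Term A} :
    biProd M1 M2 (c.comp (Ctx.node a i Ctx.hole ts)) =
      {ri | ∃ rsq p, biTrans M1 M2 a rsq p ∧ rsq i = ri ∧
        (∀ j, j ≠ i → rsq j ∈ biReach M1 M2 (ts j)) ∧ p ∈ biProd M1 M2 c} := by
  ext x
  cases x with
  | inl x =>
    rw [mem_biProd_inl, prodSet_comp_nodehole]
    constructor
    · rintro ⟨qs, p, hq, hi, hr, hpc⟩
      exact ⟨Sum.inl ∘ qs, Sum.inl p, Or.inl ⟨qs, p, rfl, rfl, hq⟩, by simp [hi],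
        fun j hj => mem_biReach_inl.2 (hr j hj), mem_biProd_inl.2 hpc⟩
    · rintro ⟨rsq, p, (⟨qs', p', hqs, hp, ht⟩ | ⟨qs', p', hqs, hp, ht⟩), hi, hr, hpc⟩
      · subst hqs; subst hp
        refine ⟨qs', p', ht, Sum.inl.inj hi, fun j hj => mem_biReach_inl.1 (hr j hj),
          mem_biProd_inl.1 hpc⟩
      · subst hqs
        exact absurd hi (by simp)
  | inr x =>
    rw [mem_biProd_inr, prodSet_comp_nodehole]
    constructor
    · rintro ⟨qs, p, hq, hi, hr, hpc⟩
      exact ⟨Sum.inr ∘ qs, Sum.inr p, Or.inr ⟨qs, p, rfl, rfl, hq⟩, by simp [hi],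
        fun j hj => mem_biReach_inr.2 (hr j hj), mem_biProd_inr.2 hpc⟩
    · rintro ⟨rsq, p, (⟨qs', p', hqs, hp, ht⟩ | ⟨qs', p', hqs, hp, ht⟩), hi, hr, hpc⟩
      · subst hqs
        exact absurd hi (by simp)
      · subst hqs; subst hp
        refine ⟨qs', p', ht, Sum.inr.inj hi, fun j hj => mem_biReach_inr.1 (hr j hj),
          mem_biProd_inr.1 hpc⟩


lemma refines_trans {P : Set (Q1 ⊕ Q2)} {t u s : Term A} {x y : ℝ}
    (h1 : Refines M1 M2 P t u y) (h2 : Refines M1 M2 P u s x) :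
    Refines M1 M2 P t s (x + y) := by
  obtain ⟨hb1, hm1, hn1⟩ := h1
  obtain ⟨hb2, hm2, hn2⟩ := h2
  refine ⟨hb2.trans hb1, fun p hp ρ => ?_, fun q hq τ => ?_⟩
  · obtain ⟨ρ', h'⟩ := hm2 p hp ρ
    obtain ⟨ρ'', h''⟩ := hm1 p hp ρ'
    exact ⟨ρ'', by linarith⟩
  · obtain ⟨τ', h'⟩ := hn2 q hq τ
    obtain ⟨τ'', h''⟩ := hn1 q hq τ'
    exact ⟨τ'', by linarith⟩

lemma refines_node {a : A.symb} {ss tt : Fin (A.ar a) → Term A}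
    {P : Set (Q1 ⊕ Q2)} {Ps : Fin (A.ar a) → Set (Q1 ⊕ Q2)} {xs : Fin (A.ar a) → ℝ}
    (hP : ∀ i ri, (∃ rsq p, biTrans M1 M2 a rsq p ∧ rsq i = ri ∧
        (∀ j, j ≠ i → rsq j ∈ biReach M1 M2 (ss j)) ∧ p ∈ P) → ri ∈ Ps i)
    (href : ∀ i, Refines M1 M2 (Ps i) (tt i) (ss i) (xs i)) :
    Refines M1 M2 P (.node a tt) (.node a ss) (∑ i, xs i) := by
  have hbr : ∀ i, biReach M1 M2 (ss i) = biReach M1 M2 (tt i) := fun i => (href i).1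
  refine ⟨?_, ?_, ?_⟩
  · rw [biReach_node, biReach_node]
    ext q
    simp only [Set.mem_setOf_eq, hbr]
  · intro p hp ρ
    cases ρ with
    | node _ _ qs _ hq rr =>
      have hqi : ∀ i, Sum.inl (qs i) ∈ Ps i := by
        intro i
        exact hP i _ ⟨Sum.inl ∘ qs, Sum.inl p, Or.inl ⟨qs, p, rfl, rfl, hq⟩, rfl,
          fun j _ => mem_biReach_inl.2 ⟨rr j⟩, hp⟩
      choose r' hr' using fun i => (href i).2.1 (qs i) (hqi i) (rr i)
      refine ⟨.node a tt qs p hq r', ?_⟩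
      have hs : ∑ i, (rr i).wt ≤ ∑ i, ((r' i).wt + xs i) :=
        Finset.sum_le_sum fun i _ => hr' i
      rw [Finset.sum_add_distrib] at hs
      simp only [RunOf.wt]
      linarith
  · intro q hq τ
    cases τ with
    | node _ _ qs _ hq' rr =>
      have hqi : ∀ i, Sum.inr (qs i) ∈ Ps i := by
        intro i
        exact hP i _ ⟨Sum.inr ∘ qs, Sum.inr q, Or.inr ⟨qs, q, rfl, rfl, hq'⟩, rfl,
          fun j _ => mem_biReach_inr.2 ⟨rr j⟩, hq⟩
      choose r' hr' using fun i => (href i).2.2 (qs i) (hqi i) (rr i)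
      refine ⟨.node a tt qs q hq' r', ?_⟩
      have hs : ∑ i, ((r' i).wt + xs i) ≤ ∑ i, (rr i).wt :=
        Finset.sum_le_sum fun i _ => hr' i
      rw [Finset.sum_add_distrib] at hs
      simp only [RunOf.wt]
      linarith


lemma asep_run_good {k : ℕ} {sr : Set (Q1 ⊕ Q2) → Term A → Term A × ℝ}
    {s : Term A} {S} (ρ : RunOf (Asep M1 M2 k sr) s S) : GoodState M1 M2 k S := by
  cases ρ with
  | node a ts qs q hq rs => exact hq.1

lemma asep_run_spec {k : ℕ} {sr : Set (Q1 ⊕ Q2) → Term A → Term A × ℝ}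
    (hsr : GoodSr M1 M2 k sr) :
    ∀ {s : Term A} {S} (ρ : RunOf (Asep M1 M2 k sr) s S),
      S.1 = biReach M1 M2 s ∧ Refines M1 M2 S.2.1 S.2.2 s ρ.wt := by
  intro s S ρ
  induction ρ with
  | node a ts qs q hq rs ih =>
    obtain ⟨hgood, hgoods, ⟨hpro1, hpro2⟩, hterm⟩ := hq
    have hreach : ∀ j, (qs j).1 = biReach M1 M2 (ts j) := fun j => (ih j).1
    constructor
    · rw [biReach_node, hpro1]
      ext r
      simp only [Set.mem_setOf_eq, hreach]
    · have href1 : Refines M1 M2 q.2.1 (Term.node a fun i => (qs i).2.2)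
          (Term.node a ts) (∑ i, (rs i).wt) := by
        refine refines_node (fun i ri hri => ?_) (fun i => (ih i).2)
        have hp2 := hpro2 i
        simp only [] at hp2
        rw [hp2]
        obtain ⟨rsq, p, h1, h2, h3, h4⟩ := hri
        exact ⟨rsq, p, h1, h2, fun j hj => by rw [hreach j]; exact h3 j hj, h4⟩
      have href2 := (hsr q.2.1 hgood.2.1 (Term.node a fun i => (qs i).2.2)).2
      rw [← hterm] at href2
      have := refines_trans href2 href1
      exact this

lemma asep_run_exists {k : ℕ} {sr : Set (Q1 ⊕ Q2) → Term A → Term A × ℝ}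
    (hsr : GoodSr M1 M2 k sr) :
    ∀ (s : Term A) (P : Set (Q1 ⊕ Q2)), P ∈ ProductiveSets M1 M2 →
      ∃ t : Term A, Nonempty (RunOf (Asep M1 M2 k sr) s (biReach M1 M2 s, P, t)) := by
  intro s
  induction s with
  | node a ts ih =>
    intro P hP
    obtain ⟨c, hc⟩ := hP
    have hPsmem : ∀ i : Fin (A.ar a),
        biProd M1 M2 (c.comp (Ctx.node a i Ctx.hole ts)) ∈ ProductiveSets M1 M2 :=
      fun i => ⟨_, rfl⟩
    choose t' hne using fun i => ih i _ (hPsmem i)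
    set Ss : Fin (A.ar a) → Set (Q1 ⊕ Q2) × Set (Q1 ⊕ Q2) × Term A := fun i =>
      (biReach M1 M2 (ts i), biProd M1 M2 (c.comp (Ctx.node a i Ctx.hole ts)), t' i)
      with hSs
    have ρ : ∀ i, RunOf (Asep M1 M2 k sr) (ts i) (Ss i) := fun i => (hne i).some
    have hspec := fun i => asep_run_spec hsr (ρ i)
    have hbrt : ∀ i, biReach M1 M2 (ts i) = biReach M1 M2 (t' i) :=
      fun i => (hspec i).2.1
    set s' : Term A := Term.node a fun i => t' i with hs'
    obtain ⟨hh1, hh2⟩ := hsr P ⟨c, hc⟩ s'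
    have hbrs : biReach M1 M2 (Term.node a ts) = biReach M1 M2 s' := by
      rw [biReach_node, biReach_node]
      ext r
      simp only [Set.mem_setOf_eq, hbrt]
    have hbr : biReach M1 M2 ((sr P s').1) = biReach M1 M2 (Term.node a ts) := by
      rw [hbrs]; exact hh2.1.symm
    set out : Set (Q1 ⊕ Q2) × Set (Q1 ⊕ Q2) × Term A :=
      (biReach M1 M2 (Term.node a ts), P, (sr P s').1) with hout
    have htrans : (Asep M1 M2 k sr).trans a Ss out := by
      refine ⟨⟨⟨Term.node a ts, rfl⟩, ⟨c, hc⟩, hbr, hh1⟩, fun i => asep_run_good (ρ i),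
        ⟨?_, ?_⟩, rfl⟩
      · show biReach M1 M2 (Term.node a ts) =
            {r | ∃ rsq, biTrans M1 M2 a rsq r ∧ ∀ j, rsq j ∈ biReach M1 M2 (ts j)}
        exact biReach_node
      · intro i
        show biProd M1 M2 (c.comp (Ctx.node a i Ctx.hole ts)) = _
        rw [biProd_comp_nodehole, hc]
    exact ⟨(sr P s').1, ⟨.node a ts Ss out htrans ρ⟩⟩


lemma hasAcc_iff {Q : Type} {M : WTA A Q} {t : Term A} :
    HasAcc M t ↔ ∃ q, M.final q ∧ Nonempty (RunOf M t q) := by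
  constructor
  · rintro ⟨x, q, r, hq, -⟩; exact ⟨q, hq, ⟨r⟩⟩
  · rintro ⟨q, hq, ⟨r⟩⟩; exact ⟨_, q, r, hq, rfl⟩

lemma sSup_accWeight {Q : Type} {M : WTA A Q} {f : Term A → Option ℝ}
    (hf : ComputesMax M f) {t : Term A} {v : ℝ} (hv : f t = some v) :
    sSup {x | AccWeight M t x} = v := by
  obtain ⟨hmem, hub⟩ := (hf t).2 v hv
  exact le_antisymm (csSup_le ⟨v, hmem⟩ hub) (le_csSup ⟨v, hub⟩ hmem)

lemma fval_bounds {f g : Term A → Option ℝ} (hf : ComputesMax M1 f) (hg : ComputesMin M2 g)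
    (hle : ∀ t, OLe (f t) (g t)) {s t : Term A} {w x y : ℝ}
    (ref : Refines M1 M2 (biFinal M1 M2) t s w)
    (hx : f s = some x) (hy : g s = some y) :
    x ≤ w + sSup {z | AccWeight M1 t z} ∧ w + sSup {z | AccWeight M1 t z} ≤ y := by
  obtain ⟨haccx, hmaxx⟩ := (hf s).2 x hx
  obtain ⟨haccy, hminy⟩ := (hg s).2 y hy
  obtain ⟨q1, r1, hq1, hr1⟩ := haccx
  obtain ⟨r1', hr1'⟩ := ref.2.1 q1 (mem_biFinal_inl.2 hq1) r1
  have hacc1t : HasAcc M1 t := ⟨_, q1, r1', hq1, rfl⟩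
  obtain ⟨v, hv⟩ : ∃ v, f t = some v := by
    cases hft : f t with
    | none => exact absurd hacc1t (((hf t).1).1 hft)
    | some v => exact ⟨v, rfl⟩
  have hsup : sSup {z | AccWeight M1 t z} = v := sSup_accWeight hf hv
  obtain ⟨hvacc, hvmax⟩ := (hf t).2 v hv
  have hxv : x - w ≤ v := by
    have := hvmax (r1'.wt + M1.fwt q1) ⟨q1, r1', hq1, rfl⟩
    linarith
  obtain ⟨q2, τ2, hq2, hτ2⟩ := haccy
  obtain ⟨τ2', hτ2'⟩ := ref.2.2 q2 (mem_biFinal_inr.2 hq2) τ2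
  have hacc2t : HasAcc M2 t := ⟨_, q2, τ2', hq2, rfl⟩
  obtain ⟨u, hu⟩ : ∃ u, g t = some u := by
    cases hgt : g t with
    | none => exact absurd hacc2t (((hg t).1).1 hgt)
    | some u => exact ⟨u, rfl⟩
  obtain ⟨huacc, humin⟩ := (hg t).2 u hu
  have hvu : v ≤ u := by
    have := hle t; rw [hv, hu] at this; exact this
  have huy : u ≤ y - w := by
    have := humin (τ2'.wt + M2.fwt q2) ⟨q2, τ2', hq2, rfl⟩
    linarith
  rw [hsup]
  constructor <;> linarith

end Aux





/-- correctness of the separating automaton: if `A_max` computes `f`,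
`A_min` computes `g`, `f ≤ g`, and `sr` is a valid refinement map, then the semantics `h`
of `A_sep` satisfies `f ≤ h ≤ g` (in the order where `⊥` is comparable only with itself,
so `h s = ⊥` exactly when both sides are `⊥`). -/
theorem asep_correct {A : RankedAlphabet} {Q1 Q2 : Type}
    [Fintype Q1] [Fintype Q2] (M1 : WTA A Q1) (M2 : WTA A Q2)
    (f g : Term A → Option ℝ)
    (hf : ComputesMax M1 f) (hg : ComputesMin M2 g)
    (hle : ∀ t, OLe (f t) (g t))
    (k : ℕ) (sr : Set (Q1 ⊕ Q2) → Term A → Term A × ℝ)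
    (hsr : GoodSr M1 M2 k sr)
    (h : Term A → Option ℝ) (hh : ComputesMax (Asep M1 M2 k sr) h) :
    (∀ s, OLe (f s) (h s)) ∧ (∀ s, OLe (h s) (g s)) := by
  have hFprod : biFinal M1 M2 ∈ ProductiveSets M1 M2 := ⟨.hole, biProd_hole⟩
  have key : ∀ s, OLe (f s) (h s) ∧ OLe (h s) (g s) := by
    intro s
    cases hfs : f s with
    | none =>
      have hnacc1 : ¬ HasAcc M1 s := ((hf s).1).1 hfs
      have hgs : g s = none := by
        have hol := hle s
        rw [hfs] at hol
        cases hgs' : g s with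
        | none => rfl
        | some y => rw [hgs'] at hol; exact absurd hol (by simp [OLe])
      have hnacc2 : ¬ HasAcc M2 s := ((hg s).1).1 hgs
      have hnacc : ¬ HasAcc (Asep M1 M2 k sr) s := by
        intro hac
        obtain ⟨S, hSf, ⟨ρ⟩⟩ := hasAcc_iff.1 hac
        have hspec := asep_run_spec hsr ρ
        obtain ⟨q, hq1, hq2⟩ := hSf.2
        rw [hspec.1] at hq1
        cases q with
        | inl q =>
          exact hnacc1 (hasAcc_iff.2 ⟨q, mem_biFinal_inl.1 hq2, mem_biReach_inl.1 hq1⟩)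
        | inr q =>
          exact hnacc2 (hasAcc_iff.2 ⟨q, mem_biFinal_inr.1 hq2, mem_biReach_inr.1 hq1⟩)
      have hhs : h s = none := ((hh s).1).2 hnacc
      rw [hgs, hhs]
      exact ⟨trivial, trivial⟩
    | some x =>
      obtain ⟨y, hgy⟩ : ∃ y, g s = some y := by
        cases hgs' : g s with
        | none =>
          have hol := hle s; rw [hfs, hgs'] at hol; exact absurd hol (by simp [OLe])
        | some y => exact ⟨y, rfl⟩
      have hub : ∀ z, AccWeight (Asep M1 M2 k sr) s z → x ≤ z ∧ z ≤ y := by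
        rintro z ⟨S, ρ, hSfin, hwt⟩
        have hspec := asep_run_spec hsr ρ
        have ref : Refines M1 M2 (biFinal M1 M2) S.2.2 s ρ.wt := by
          rw [← hSfin.1]; exact hspec.2
        have hb := fval_bounds hf hg hle ref hfs hgy
        have hfwt : (Asep M1 M2 k sr).fwt S = sSup {z | AccWeight M1 S.2.2 z} := rfl
        rw [hfwt] at hwt
        constructor <;> linarith [hb.1, hb.2]
      have hex : HasAcc (Asep M1 M2 k sr) s := by
        obtain ⟨t, ⟨ρ⟩⟩ := asep_run_exists hsr s (biFinal M1 M2) hFprod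
        refine ⟨_, _, ρ, ⟨rfl, ?_⟩, rfl⟩
        obtain ⟨q1, r1, hq1, -⟩ := ((hf s).2 x hfs).1
        exact ⟨Sum.inl q1, mem_biReach_inl.2 ⟨r1⟩, mem_biFinal_inl.2 hq1⟩
      obtain ⟨z, hz⟩ : ∃ z, h s = some z := by
        cases hhs' : h s with
        | none => exact absurd hex (((hh s).1).1 hhs')
        | some z => exact ⟨z, rfl⟩
      obtain ⟨hzacc, hzmax⟩ := (hh s).2 z hz
      rw [hgy, hz]
      exact ⟨(hub z hzacc).1, (hub z hzacc).2⟩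
  exact ⟨fun s => (key s).1, fun s => (key s).2⟩
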